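/- Let a, b, c be positive integers, let Γ be the Z-grading of K[x,y,z] with deg x = a, deg y = b, deg z = −c, and let φ be a Γ-graded automorphism with φ(z) = z, φ(x) = f, φ(y) = g. Then the pair f̃ = f(u,v,1), g̃ = g(u,v,1) defines an automorphism of K[u,v] that preserves the Z/cZ-grading Γ̃ with deg u = a mod c, deg v = b mod c; that is, every monomial u^i v^j occurring in f̃ satisfies ai + bj ≡ a (mod c) and every monomial u^i v^j occurring in g̃ satisfies ai + bj ≡ b (mod c). -/

import Mathlib

open MvPolynomial

/-- For the `ℤ`-grading of `K[x,y,z]` with weights `w`, an automorphism is *graded*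
if it maps each homogeneous component into itself. -/
def IsGraded3 {K : Type*} [CommRing K] (w : Fin 3 → ℤ)
    (φ : MvPolynomial (Fin 3) K ≃ₐ[K] MvPolynomial (Fin 3) K) : Prop :=
  ∀ (d : ℤ) (f : MvPolynomial (Fin 3) K),
    f.IsWeightedHomogeneous w d → (φ f).IsWeightedHomogeneous w d

/-- For the `ℤ/cℤ`-grading of `K[u,v]` with weights `w`, an automorphism is *graded*
if it maps each homogeneous component into itself. -/
def IsGraded2 {K : Type*} [CommRing K] {c : ℕ} (w : Fin 2 → ZMod c)
    (φ : MvPolynomial (Fin 2) K ≃ₐ[K] MvPolynomial (Fin 2) K) : Prop :=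
  ∀ (d : ZMod c) (f : MvPolynomial (Fin 2) K),
    f.IsWeightedHomogeneous w d → (φ f).IsWeightedHomogeneous w d

/-- The restriction homomorphism `K[x,y,z] → K[u,v]`, `x ↦ u`, `y ↦ v`, `z ↦ 1`,
i.e. restriction of functions to the plane `z = 1`. -/
noncomputable def restrict (K : Type*) [CommRing K] :
    MvPolynomial (Fin 3) K →ₐ[K] MvPolynomial (Fin 2) K :=
  aeval ![X 0, X 1, 1]

/- ### Auxiliary lemmas -/

lemma weight_fin3 {M : Type*} [AddCommMonoid M] (w : Fin 3 → M) (m : Fin 3 →₀ ℕ) :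
    Finsupp.weight w m = m 0 • w 0 + m 1 • w 1 + m 2 • w 2 := by
  rw [Finsupp.weight_apply, Finsupp.sum_fintype _ _ (fun i => zero_smul ℕ (w i)),
    Fin.sum_univ_three]

lemma weight_fin2 {M : Type*} [AddCommMonoid M] (w : Fin 2 → M) (m : Fin 2 →₀ ℕ) :
    Finsupp.weight w m = m 0 • w 0 + m 1 • w 1 := by
  rw [Finsupp.weight_apply, Finsupp.sum_fintype _ _ (fun i => zero_smul ℕ (w i)),
    Fin.sum_univ_two]

lemma whPow {σ M R : Type*} [AddCommMonoid M] [CommSemiring R]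
    {w : σ → M} {φ : MvPolynomial σ R} {m : M}
    (h : φ.IsWeightedHomogeneous w m) (n : ℕ) :
    (φ ^ n).IsWeightedHomogeneous w (n • m) := by
  induction n with
  | zero => simpa using isWeightedHomogeneous_one R w
  | succ n ih => rw [pow_succ, succ_nsmul]; exact ih.mul h

lemma restrict_monomial {K : Type*} [CommRing K] (m : Fin 3 →₀ ℕ) (r : K) :
    restrict K (monomial m r) = C r * (X 0 ^ m 0 * X 1 ^ m 1) := by
  rw [restrict, aeval_monomial, Finsupp.prod_fintype _ _ (fun i => pow_zero _),
    Fin.prod_univ_three]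
  simp [algebraMap_eq, mul_assoc]

/-- Restriction to the plane `z = 1` sends `(a,b,-c)`-homogeneous polynomials of degree `d`
to `(a mod c, b mod c)`-homogeneous polynomials of degree `d mod c`. -/
lemma restrict_isWeightedHomogeneous {K : Type*} [CommRing K] (a b c : ℕ)
    {p : MvPolynomial (Fin 3) K} {d : ℤ}
    (hp : p.IsWeightedHomogeneous ![(a : ℤ), (b : ℤ), -(c : ℤ)] d) :
    (restrict K p).IsWeightedHomogeneous ![(a : ZMod c), (b : ZMod c)] ((d : ZMod c)) := by
  rw [← mem_weightedHomogeneousSubmodule, p.as_sum, map_sum]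
  apply Submodule.sum_mem
  intro m hm
  rw [mem_weightedHomogeneousSubmodule, restrict_monomial]
  have hw := hp (mem_support_iff.mp hm)
  rw [weight_fin3] at hw
  simp only [Matrix.cons_val_zero, Matrix.cons_val_one, Matrix.head_cons,
    Matrix.cons_val_two, Matrix.tail_cons, smul_eq_mul, nsmul_eq_mul] at hw
  have h2 : (0 : ZMod c) + (m 0 • (a : ZMod c) + m 1 • (b : ZMod c)) = (d : ZMod c) := by
    have := congrArg (fun t : ℤ => (t : ZMod c)) hw
    push_cast at this
    rw [ZMod.natCast_self] at this
    simp only [nsmul_eq_mul, zero_add]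
    rw [← this]; ring
  have hhom := (isWeightedHomogeneous_C (R := K) ![(a : ZMod c), (b : ZMod c)]
      (coeff m p)).mul
    ((whPow (isWeightedHomogeneous_X K ![(a : ZMod c), (b : ZMod c)] 0) (m 0)).mul
      (whPow (isWeightedHomogeneous_X K ![(a : ZMod c), (b : ZMod c)] 1) (m 1)))
  simpa only [Matrix.cons_val_zero, Matrix.cons_val_one, Matrix.head_cons, h2] using hhom

/-- Key composition identity: for an automorphism `τ` of `K[x,y,z]` fixing `z`,
restricting, lifting back (`u ↦ x`, `v ↦ y`), applying `τ` and restricting again is the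
same as applying `τ` and restricting. -/
lemma restrict_comp_key {K : Type*} [CommRing K]
    (τ : MvPolynomial (Fin 3) K ≃ₐ[K] MvPolynomial (Fin 3) K)
    (hτ : τ (X 2) = X 2) (p : MvPolynomial (Fin 3) K) :
    restrict K (τ ((aeval ![X 0, X 1] : MvPolynomial (Fin 2) K →ₐ[K] MvPolynomial (Fin 3) K)
      (restrict K p))) = restrict K (τ p) := by
  have h : ((restrict K).comp (τ.toAlgHom.comp
      ((aeval ![X 0, X 1] : MvPolynomial (Fin 2) K →ₐ[K] MvPolynomial (Fin 3) K).comp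
        (restrict K)))) = (restrict K).comp τ.toAlgHom := by
    apply MvPolynomial.algHom_ext
    intro i
    fin_cases i <;>
      simp [restrict, hτ]
  exact DFunLike.congr_fun h p

theorem restriction_of_graded_automorphism_is_graded_automorphism_of_plane
    {K : Type*} [Field K] [IsAlgClosed K] [CharZero K]
    (a b c : ℕ) (ha : 0 < a) (hb : 0 < b) (hc : 0 < c)
    (φ : MvPolynomial (Fin 3) K ≃ₐ[K] MvPolynomial (Fin 3) K)
    (hφ : IsGraded3 ![(a : ℤ), (b : ℤ), -(c : ℤ)] φ)
    (hz : φ (X 2) = X 2) :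
    (∃ ψ : MvPolynomial (Fin 2) K ≃ₐ[K] MvPolynomial (Fin 2) K,
        ψ (X 0) = restrict K (φ (X 0)) ∧ ψ (X 1) = restrict K (φ (X 1)) ∧
        IsGraded2 ![(a : ZMod c), (b : ZMod c)] ψ) ∧
    (restrict K (φ (X 0))).IsWeightedHomogeneous ![(a : ZMod c), (b : ZMod c)] (a : ZMod c) ∧
    (restrict K (φ (X 1))).IsWeightedHomogeneous ![(a : ZMod c), (b : ZMod c)] (b : ZMod c) := by
  have hz' : φ.symm (X 2) = X 2 := by
    apply φ.injective; rw [AlgEquiv.apply_symm_apply, hz]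
  -- homogeneity of φ(x) and φ(y)
  have hx : (φ (X 0)).IsWeightedHomogeneous ![(a : ℤ), (b : ℤ), -(c : ℤ)] (a : ℤ) := by
    apply hφ
    simpa using isWeightedHomogeneous_X K ![(a : ℤ), (b : ℤ), -(c : ℤ)] 0
  have hy : (φ (X 1)).IsWeightedHomogeneous ![(a : ℤ), (b : ℤ), -(c : ℤ)] (b : ℤ) := by
    apply hφ
    simpa using isWeightedHomogeneous_X K ![(a : ℤ), (b : ℤ), -(c : ℤ)] 1
  have hrf : (restrict K (φ (X 0))).IsWeightedHomogeneous
      ![(a : ZMod c), (b : ZMod c)] (a : ZMod c) := by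
    simpa using restrict_isWeightedHomogeneous a b c hx
  have hrg : (restrict K (φ (X 1))).IsWeightedHomogeneous
      ![(a : ZMod c), (b : ZMod c)] (b : ZMod c) := by
    simpa using restrict_isWeightedHomogeneous a b c hy
  -- the automorphism ψ
  set j : MvPolynomial (Fin 2) K →ₐ[K] MvPolynomial (Fin 3) K := aeval ![X 0, X 1] with hj
  set F : MvPolynomial (Fin 2) K →ₐ[K] MvPolynomial (Fin 2) K :=
    (restrict K).comp (φ.toAlgHom.comp j) with hF
  set G : MvPolynomial (Fin 2) K →ₐ[K] MvPolynomial (Fin 2) K :=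
    (restrict K).comp (φ.symm.toAlgHom.comp j) with hG
  have hFapp : ∀ p, F p = restrict K (φ (j p)) := fun p => rfl
  have hGapp : ∀ p, G p = restrict K (φ.symm (j p)) := fun p => rfl
  have hFG : F.comp G = AlgHom.id K _ := by
    apply MvPolynomial.algHom_ext
    intro i
    have : ∀ i : Fin 2, F (G (X i)) = X i := by
      intro i
      rw [hGapp, hFapp, hj, restrict_comp_key φ hz, AlgEquiv.apply_symm_apply]
      fin_cases i <;> simp [restrict]
    simpa using this i
  have hGF : G.comp F = AlgHom.id K _ := by
    apply MvPolynomial.algHom_ext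
    intro i
    have : ∀ i : Fin 2, G (F (X i)) = X i := by
      intro i
      rw [hFapp, hGapp, hj, restrict_comp_key φ.symm hz', AlgEquiv.symm_apply_apply]
      fin_cases i <;> simp [restrict]
    simpa using this i
  let ψ : MvPolynomial (Fin 2) K ≃ₐ[K] MvPolynomial (Fin 2) K :=
    AlgEquiv.ofAlgHom F G hFG hGF
  have hψ0 : ψ (X 0) = restrict K (φ (X 0)) := by
    show F (X 0) = _
    rw [hFapp]; congr 1; congr 1; simp [hj]
  have hψ1 : ψ (X 1) = restrict K (φ (X 1)) := by
    show F (X 1) = _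
    rw [hFapp]; congr 1; congr 1; simp [hj]
  -- F is aeval of the images
  have hFa : F = aeval ![restrict K (φ (X 0)), restrict K (φ (X 1))] := by
    apply MvPolynomial.algHom_ext
    intro i
    fin_cases i
    · simpa using (show F (X 0) = restrict K (φ (X 0)) from hψ0)
    · simpa using (show F (X 1) = restrict K (φ (X 1)) from hψ1)
  refine ⟨⟨ψ, hψ0, hψ1, ?_⟩, hrf, hrg⟩
  intro d p hp
  show (F p).IsWeightedHomogeneous _ d
  rw [← mem_weightedHomogeneousSubmodule, p.as_sum, map_sum]
  apply Submodule.sum_mem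
  intro m hm
  have hw := hp (mem_support_iff.mp hm)
  rw [weight_fin2] at hw
  simp only [Matrix.cons_val_zero, Matrix.cons_val_one, Matrix.head_cons] at hw
  rw [mem_weightedHomogeneousSubmodule, hFa, aeval_monomial,
    Finsupp.prod_fintype _ _ (fun i => pow_zero _), Fin.prod_univ_two]
  simp only [Matrix.cons_val_zero, Matrix.cons_val_one, Matrix.head_cons, algebraMap_eq]
  have hhom := (isWeightedHomogeneous_C (R := K) ![(a : ZMod c), (b : ZMod c)]
      (coeff m p)).mul ((whPow hrf (m 0)).mul (whPow hrg (m 1)))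
  rw [show (0 : ZMod c) + (m 0 • (a : ZMod c) + m 1 • (b : ZMod c)) = d by
    rw [zero_add, hw]] at hhom
  exact hhom
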